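/- arXiv:1601.04383 — 7 statements merged into one kernel-verified Lean document; each statement's English description precedes it below -/
import Mathlib

section
/- Let A, B be complex numbers with A ≠ 0, n ≥ 2, and let q ≠ 1 be a complex number such that q = t_i/t_j for two distinct roots t_i, t_j of D(t) = 1 + Bt + At^n. Then (−1)^n B^n (1−q) q^{n−1} (1−q^{n−1})^{n−1} = (1−q^n)^n A. -/
theorem stmt_5 (n : ℕ) (hn : 2 ≤ n) (A B : ℂ) (hA : A ≠ 0) (q ti tj : ℂ) (hq : q ≠ 1)
    (hti : 1 + B * ti + A * ti ^ n = 0) (htj : 1 + B * tj + A * tj ^ n = 0)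
    (hquot : ti = q * tj) :
    (-1) ^ n * B ^ n * (1 - q) * q ^ (n - 1) * (1 - q ^ (n - 1)) ^ (n - 1)
      = (1 - q ^ n) ^ n * A := by
  obtain ⟨m, rfl⟩ : ∃ m, n = m + 1 := ⟨n - 1, by omega⟩
  subst hquot
  simp only [Nat.add_sub_cancel]
  have htj0 : tj ≠ 0 := by rintro rfl; simp at htj
  have hq0 : q ≠ 0 := by rintro rfl; simp at hti
  have hq1 : q - 1 ≠ 0 := sub_ne_zero.mpr hq
  have key1 : B * tj * (q - 1) = -(A * tj ^ (m + 1) * (q ^ (m + 1) - 1)) := by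
    linear_combination hti - htj
  have key2 : A * tj ^ (m + 1) * q * (q ^ m - 1) = q - 1 := by
    linear_combination key1 - (q - 1) * htj
  have hc : tj ^ (m + 1) * (q - 1) ^ (m + 1) ≠ 0 :=
    mul_ne_zero (pow_ne_zero _ htj0) (pow_ne_zero _ hq1)
  apply mul_right_cancel₀ hc
  have E1 : B ^ (m + 1) * tj ^ (m + 1) * (q - 1) ^ (m + 1)
      = (-1) ^ (m + 1) * (A ^ (m + 1) * (tj ^ (m + 1)) ^ (m + 1) * (q ^ (m + 1) - 1) ^ (m + 1)) := by
    rw [← mul_pow, ← mul_pow, key1, neg_pow, mul_pow, mul_pow]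
  have E2 : A ^ m * (tj ^ (m + 1)) ^ m * q ^ m * (q ^ m - 1) ^ m = (q - 1) ^ m := by
    rw [← mul_pow, ← mul_pow, ← mul_pow, key2]
  have s1 : ((1 : ℂ) - q ^ m) ^ m = (-1) ^ m * (q ^ m - 1) ^ m := by
    rw [show (1 : ℂ) - q ^ m = -(q ^ m - 1) by ring, neg_pow]
  have s2 : ((1 : ℂ) - q ^ (m + 1)) ^ (m + 1) = (-1) ^ (m + 1) * (q ^ (m + 1) - 1) ^ (m + 1) := by
    rw [show (1 : ℂ) - q ^ (m + 1) = -(q ^ (m + 1) - 1) by ring, neg_pow]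
  have sgn : ((-1 : ℂ)) ^ (m + 1) * (-1) ^ (m + 1) = 1 := by
    rw [← mul_pow]; norm_num
  have sgn3 : ∀ Y : ℂ, ((-1 : ℂ)) ^ (m + 1) * ((-1) ^ (m + 1) * Y) = Y := fun Y => by
    rw [← mul_assoc, sgn, one_mul]
  calc (-1) ^ (m + 1) * B ^ (m + 1) * (1 - q) * q ^ m * (1 - q ^ m) ^ m *
        (tj ^ (m + 1) * (q - 1) ^ (m + 1))
      = (-1) ^ (m + 1) * (B ^ (m + 1) * tj ^ (m + 1) * (q - 1) ^ (m + 1) *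
          ((1 - q) * q ^ m * (1 - q ^ m) ^ m)) := by ring
    _ = (-1) ^ (m + 1) * ((-1) ^ (m + 1) *
          (A ^ (m + 1) * (tj ^ (m + 1)) ^ (m + 1) * (q ^ (m + 1) - 1) ^ (m + 1) *
            ((1 - q) * q ^ m * (1 - q ^ m) ^ m))) := by rw [E1]; ring
    _ = A ^ (m + 1) * (tj ^ (m + 1)) ^ (m + 1) * (q ^ (m + 1) - 1) ^ (m + 1) *
          ((1 - q) * q ^ m * ((-1) ^ m * (q ^ m - 1) ^ m)) := by rw [sgn3, s1]
    _ = A * tj ^ (m + 1) * (q ^ (m + 1) - 1) ^ (m + 1) * (1 - q) * (-1) ^ m *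
          (A ^ m * (tj ^ (m + 1)) ^ m * q ^ m * (q ^ m - 1) ^ m) := by ring
    _ = A * tj ^ (m + 1) * (q ^ (m + 1) - 1) ^ (m + 1) * (1 - q) * (-1) ^ m * (q - 1) ^ m := by
        rw [E2]
    _ = (-1) ^ m * -1 * (q ^ (m + 1) - 1) ^ (m + 1) * A * (tj ^ (m + 1) * (q - 1) ^ (m + 1)) := by
        ring
    _ = (1 - q ^ (m + 1)) ^ (m + 1) * A * (tj ^ (m + 1) * (q - 1) ^ (m + 1)) := by
        rw [s2, pow_succ (-1 : ℂ)]
end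

section
/- Fix n ≥ 2 and let H_m(z) be defined by H_m(z) = (−1)^m B(z)^m for 0 ≤ m < n and H_m(z) = −B(z)H_{m−1}(z) − A(z)H_{m−n}(z) for m ≥ n, where A, B are complex polynomials of degrees a and b respectively. Write m = np + r with 0 ≤ r < n. Then deg H_m ≤ mb if nb > a, and deg H_m ≤ pa + rb if nb ≤ a. -/
open Polynomial

theorem stmt_7 (n : ℕ) (hn : 2 ≤ n) (A B : Polynomial ℂ) (H : ℕ → Polynomial ℂ)
    (hinit : ∀ m < n, H m = (-1) ^ m * B ^ m)
    (hrec : ∀ m, n ≤ m → H m = -(B * H (m - 1)) - A * H (m - n))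
    (a b : ℕ) (ha : A.natDegree = a) (hb : B.natDegree = b)
    (m p r : ℕ) (hm : m = n * p + r) (hr : r < n) :
    (n * b > a → (H m).natDegree ≤ m * b) ∧
    (n * b ≤ a → (H m).natDegree ≤ p * a + r * b) := by
  have h0 : 0 < n := by omega
  have init_bound : ∀ k, k < n → (H k).natDegree ≤ k * b := by
    intro k hk
    rw [hinit k hk]
    calc ((-1 : Polynomial ℂ) ^ k * B ^ k).natDegree
        ≤ ((-1 : Polynomial ℂ) ^ k).natDegree + (B ^ k).natDegree := natDegree_mul_le
      _ ≤ k * (-1 : Polynomial ℂ).natDegree + k * B.natDegree :=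
          add_le_add natDegree_pow_le natDegree_pow_le
      _ = k * b := by simp [hb]
  have dm : ∀ q' r', r' < n → (n * q' + r') / n = q' ∧ (n * q' + r') % n = r' := by
    intro q' r' h
    constructor
    · rw [Nat.mul_add_div h0, Nat.div_eq_of_lt h, add_zero]
    · rw [Nat.mul_add_mod, Nat.mod_eq_of_lt h]
  have hq : m / n = p := by rw [hm, Nat.mul_add_div h0, Nat.div_eq_of_lt hr, add_zero]
  have hrm : m % n = r := by rw [hm, Nat.mul_add_mod, Nat.mod_eq_of_lt hr]
  constructor
  · -- case n*b > a
    intro hab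
    have key : ∀ k, (H k).natDegree ≤ k * b := by
      intro k
      induction k using Nat.strong_induction_on with
      | _ k ih =>
        by_cases hk : k < n
        · exact init_bound k hk
        · push_neg at hk
          rw [hrec k hk]
          have h1 : (B * H (k - 1)).natDegree ≤ k * b := by
            calc (B * H (k - 1)).natDegree ≤ B.natDegree + (H (k - 1)).natDegree :=
                natDegree_mul_le
              _ ≤ b + (k - 1) * b := add_le_add (le_of_eq hb) (ih (k - 1) (by omega))
              _ = ((k - 1) + 1) * b := by ring
              _ = k * b := by rw [Nat.sub_add_cancel (by omega)]
          have h2 : (A * H (k - n)).natDegree ≤ k * b := by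
            calc (A * H (k - n)).natDegree ≤ A.natDegree + (H (k - n)).natDegree :=
                natDegree_mul_le
              _ ≤ a + (k - n) * b := add_le_add (le_of_eq ha) (ih (k - n) (by omega))
              _ ≤ n * b + (k - n) * b := by omega
              _ = (n + (k - n)) * b := by ring
              _ = k * b := by rw [Nat.add_sub_cancel' hk]
          calc (-(B * H (k - 1)) - A * H (k - n)).natDegree
              ≤ max (-(B * H (k - 1))).natDegree (A * H (k - n)).natDegree :=
                natDegree_sub_le _ _
            _ = max (B * H (k - 1)).natDegree (A * H (k - n)).natDegree := by
                rw [natDegree_neg]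
            _ ≤ k * b := max_le h1 h2
    exact key m
  · -- case n*b ≤ a
    intro hab
    have key : ∀ k, (H k).natDegree ≤ (k / n) * a + (k % n) * b := by
      intro k
      induction k using Nat.strong_induction_on with
      | _ k ih =>
        by_cases hk : k < n
        · rw [Nat.div_eq_of_lt hk, Nat.mod_eq_of_lt hk]
          simpa using init_bound k hk
        · push_neg at hk
          -- k ≥ n. Write k = n*q + rr
          set q := k / n with hqdef
          set rr := k % n with hrrdef
          have hkq : n * q + rr = k := Nat.div_add_mod k n
          have hrrn : rr < n := Nat.mod_lt _ h0
          have hq1 : 1 ≤ q := (Nat.one_le_div_iff h0).mpr hk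
          obtain ⟨q', hq'⟩ : ∃ q', q = q' + 1 := ⟨q - 1, by omega⟩
          have hk' : k = n * q' + n + rr := by
            rw [← hkq, hq']; ring
          rw [hrec k hk]
          -- bound for the A term
          have ekn : k - n = n * q' + rr := by
            generalize n * q' = t at hk' ⊢
            omega
          have dkn := dm q' rr hrrn
          have h2 : (A * H (k - n)).natDegree ≤ q * a + rr * b := by
            calc (A * H (k - n)).natDegree ≤ A.natDegree + (H (k - n)).natDegree :=
                natDegree_mul_le
              _ ≤ a + ((k - n) / n * a + (k - n) % n * b) :=
                add_le_add (le_of_eq ha) (ih (k - n) (by omega))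
              _ = a + (q' * a + rr * b) := by rw [ekn, dkn.1, dkn.2]
              _ = (q' + 1) * a + rr * b := by ring
              _ = q * a + rr * b := by rw [← hq']
          -- bound for the B term
          have h1 : (B * H (k - 1)).natDegree ≤ q * a + rr * b := by
            by_cases hrr0 : rr = 0
            · have ek1 : k - 1 = n * q' + (n - 1) := by
                generalize n * q' = t at hk' ⊢
                omega
              have dk1 := dm q' (n - 1) (by omega)
              have hnb : b + (n - 1) * b = n * b := by
                calc b + (n - 1) * b = ((n - 1) + 1) * b := by ring
                  _ = n * b := by rw [Nat.sub_add_cancel (by omega)]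
              calc (B * H (k - 1)).natDegree ≤ B.natDegree + (H (k - 1)).natDegree :=
                  natDegree_mul_le
                _ ≤ b + ((k - 1) / n * a + (k - 1) % n * b) :=
                  add_le_add (le_of_eq hb) (ih (k - 1) (by omega))
                _ = b + (q' * a + (n - 1) * b) := by rw [ek1, dk1.1, dk1.2]
                _ = q' * a + (b + (n - 1) * b) := by ring
                _ = q' * a + n * b := by rw [hnb]
                _ ≤ q' * a + a := by omega
                _ = (q' + 1) * a := by ring
                _ = q * a + rr * b := by rw [← hq', hrr0, Nat.zero_mul, Nat.add_zero]
            · have ek1 : k - 1 = n * q + (rr - 1) := by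
                generalize n * q = t at hkq ⊢
                omega
              have dk1 := dm q (rr - 1) (by omega)
              calc (B * H (k - 1)).natDegree ≤ B.natDegree + (H (k - 1)).natDegree :=
                  natDegree_mul_le
                _ ≤ b + ((k - 1) / n * a + (k - 1) % n * b) :=
                  add_le_add (le_of_eq hb) (ih (k - 1) (by omega))
                _ = b + (q * a + (rr - 1) * b) := by rw [ek1, dk1.1, dk1.2]
                _ = q * a + ((rr - 1) + 1) * b := by ring
                _ = q * a + rr * b := by rw [Nat.sub_add_cancel (by omega)]
          calc (-(B * H (k - 1)) - A * H (k - n)).natDegree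
              ≤ max (-(B * H (k - 1))).natDegree (A * H (k - n)).natDegree :=
                natDegree_sub_le _ _
            _ = max (B * H (k - 1)).natDegree (A * H (k - n)).natDegree := by
                rw [natDegree_neg]
            _ ≤ q * a + rr * b := max_le h1 h2
    have := key m
    rwa [hq, hrm] at this
end

section
/- Let n ≥ 2 and 0 < θ < π/n. Then 0 < sin^n(nθ) / (sin θ · sin^{n−1}((n−1)θ)) ≤ n^n/(n−1)^{n−1}. -/
lemma sin_mono_aux (a b : ℝ) (ha : 0 ≤ a) (hab : a ≤ b) (hb : b ≤ Real.pi) :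
    a * Real.sin b ≤ b * Real.sin a := by
  rcases eq_or_lt_of_le (ha.trans hab) with hb0 | hb0
  · obtain rfl : b = 0 := hb0.symm
    obtain rfl : a = 0 := le_antisymm hab ha
    simp
  have hdiv0 : 0 ≤ a / b := div_nonneg ha hb0.le
  have hdiv1 : a / b ≤ 1 := div_le_one_of_le₀ hab hb0.le
  have key := strictConcaveOn_sin_Icc.concaveOn.2
    (Set.mem_Icc.mpr ⟨(ha.trans hab), hb⟩) (Set.mem_Icc.mpr ⟨le_rfl, Real.pi_pos.le⟩)
    hdiv0 (by linarith : (0:ℝ) ≤ 1 - a / b) (by ring)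
  simp only [smul_eq_mul, mul_zero, Real.sin_zero, add_zero] at key
  rw [div_mul_cancel₀ _ hb0.ne'] at key
  calc a * Real.sin b = b * (a / b * Real.sin b) := by field_simp
    _ ≤ b * Real.sin a := mul_le_mul_of_nonneg_left key hb0.le

theorem stmt_9 (n : ℕ) (hn : 2 ≤ n) (θ : ℝ) (hθ0 : 0 < θ) (hθ1 : θ < Real.pi / n) :
    0 < (Real.sin (n * θ)) ^ n / (Real.sin θ * (Real.sin ((n - 1 : ℕ) * θ)) ^ (n - 1)) ∧
    (Real.sin (n * θ)) ^ n / (Real.sin θ * (Real.sin ((n - 1 : ℕ) * θ)) ^ (n - 1))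
      ≤ (n : ℝ) ^ n / ((n : ℝ) - 1) ^ (n - 1) := by
  obtain ⟨m, rfl⟩ : ∃ m, n = m + 1 := ⟨n - 1, (Nat.succ_pred_eq_of_pos (by omega)).symm⟩
  have hm1 : 1 ≤ m := by omega
  set s := m + 1 with hs
  have hmR : (1 : ℝ) ≤ (m : ℝ) := by exact_mod_cast hm1
  have hnR : (0 : ℝ) < (s : ℝ) := by positivity
  have hsub : s - 1 = m := by omega
  have hcast : ((s : ℝ) - 1) = (m : ℝ) := by push_cast [hs]; ring
  -- angle facts
  have hnθπ : (s : ℝ) * θ < Real.pi := by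
    have := (lt_div_iff₀ hnR).mp hθ1
    nlinarith
  have hnθ0 : 0 < (s : ℝ) * θ := by positivity
  have hmθ0 : 0 < (m : ℝ) * θ := by positivity
  have hmn : (m : ℝ) * θ ≤ (s : ℝ) * θ := by
    have : (m : ℝ) ≤ s := by exact_mod_cast Nat.le_succ m
    nlinarith
  have hθπ : θ < Real.pi := by nlinarith
  have hsθ : 0 < Real.sin θ := Real.sin_pos_of_pos_of_lt_pi hθ0 hθπ
  have hsn : 0 < Real.sin ((s : ℝ) * θ) := Real.sin_pos_of_pos_of_lt_pi hnθ0 hnθπ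
  have hsm : 0 < Real.sin ((m : ℝ) * θ) :=
    Real.sin_pos_of_pos_of_lt_pi hmθ0 (lt_of_le_of_lt hmn hnθπ)
  -- key inequalities
  have h1 : Real.sin ((s : ℝ) * θ) ≤ (s : ℝ) * Real.sin θ := by
    have := sin_mono_aux θ ((s : ℝ) * θ) hθ0.le (by nlinarith) hnθπ.le
    nlinarith
  have h2 : (m : ℝ) * Real.sin ((s : ℝ) * θ) ≤ (s : ℝ) * Real.sin ((m : ℝ) * θ) := by
    have := sin_mono_aux ((m : ℝ) * θ) ((s : ℝ) * θ) hmθ0.le hmn hnθπ.le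
    nlinarith
  rw [hsub]
  have hrw : Real.sin ((s : ℝ) * θ) ^ s / (Real.sin θ * Real.sin ((m : ℕ) * θ) ^ m)
      = (Real.sin ((s : ℝ) * θ) / Real.sin θ) *
        (Real.sin ((s : ℝ) * θ) / Real.sin ((m : ℝ) * θ)) ^ m := by
    rw [div_pow, pow_succ, ← mul_div_mul_comm]
    ring_nf
  constructor
  · rw [hrw]; positivity
  · rw [hrw, hcast]
    have hA : Real.sin ((s : ℝ) * θ) / Real.sin θ ≤ (s : ℝ) :=
      (div_le_iff₀ hsθ).mpr (by linarith)
    have hB : Real.sin ((s : ℝ) * θ) / Real.sin ((m : ℝ) * θ) ≤ (s : ℝ) / (m : ℝ) := by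
      rw [div_le_div_iff₀ hsm (by linarith)]
      nlinarith
    have hBpow : (Real.sin ((s : ℝ) * θ) / Real.sin ((m : ℝ) * θ)) ^ m
        ≤ ((s : ℝ) / (m : ℝ)) ^ m :=
      pow_le_pow_left₀ (by positivity) hB m
    calc (Real.sin ((s : ℝ) * θ) / Real.sin θ) *
          (Real.sin ((s : ℝ) * θ) / Real.sin ((m : ℝ) * θ)) ^ m
        ≤ (s : ℝ) * ((s : ℝ) / (m : ℝ)) ^ m := by
          apply mul_le_mul hA hBpow (by positivity) (by positivity)
      _ = (s : ℝ) ^ s / (m : ℝ) ^ m := by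
          rw [div_pow, pow_succ]
          field_simp
end

section
/- For every integer n ≥ 2 and real θ ∈ (0, π/n), (n−1) sin(nθ) ≤ n sin((n−1)θ). -/
theorem stmt_11 (n : ℕ) (hn : 2 ≤ n) (θ : ℝ) (hθ0 : 0 < θ) (hθ1 : θ < Real.pi / n) :
    ((n : ℝ) - 1) * Real.sin (n * θ) ≤ n * Real.sin ((n - 1 : ℕ) * θ) := by
  have hn0 : (0:ℝ) < n := by positivity
  have hcast : ((n - 1 : ℕ) : ℝ) = (n : ℝ) - 1 := by
    have : 1 ≤ n := by omega
    push_cast [Nat.cast_sub this]; ring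
  set m : ℝ := (n : ℝ) - 1 with hm
  have hm1 : 1 ≤ m := by
    have : (2:ℝ) ≤ n := by exact_mod_cast hn
    simp [hm]; linarith
  have hθπ : (n:ℝ) * θ < Real.pi := by
    have := (lt_div_iff₀ hn0).mp hθ1
    linarith [this]
  have hmθpos : 0 < m * θ := by positivity
  have hmθπ : m * θ < Real.pi := by
    have : m * θ < (n:ℝ) * θ := by nlinarith
    linarith
  have hsinm : 0 < Real.sin (m * θ) := Real.sin_pos_of_pos_of_lt_pi hmθpos hmθπ
  have hsinθ : 0 < Real.sin θ := by
    apply Real.sin_pos_of_pos_of_lt_pi hθ0; nlinarith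
  -- key: m * cos(mθ) * sin θ ≤ sin(mθ)
  have key : m * Real.cos (m * θ) * Real.sin θ ≤ Real.sin (m * θ) := by
    rcases le_or_gt (Real.cos (m * θ)) 0 with hc | hc
    · have h0 : m * Real.cos (m * θ) ≤ 0 :=
        mul_nonpos_of_nonneg_of_nonpos (by linarith) hc
      nlinarith [mul_nonpos_of_nonpos_of_nonneg h0 hsinθ.le]
    · have hlt : m * θ < Real.pi / 2 := by
        by_contra h
        push_neg at h
        have := Real.cos_nonpos_of_pi_div_two_le_of_le h (by linarith [Real.pi_pos])
        linarith
      have htan : m * θ < Real.tan (m * θ) := Real.lt_tan hmθpos hlt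
      have hsinlt : Real.sin θ < θ := Real.sin_lt hθ0
      have : Real.tan (m * θ) = Real.sin (m * θ) / Real.cos (m * θ) := Real.tan_eq_sin_div_cos _
      have h2 : m * θ * Real.cos (m*θ) < Real.sin (m*θ) := by
        rw [this] at htan
        calc m * θ * Real.cos (m*θ) < Real.sin (m*θ)/Real.cos (m*θ) * Real.cos (m*θ) := by
              exact mul_lt_mul_of_pos_right htan hc
          _ = Real.sin (m*θ) := by field_simp
      nlinarith
  have hexp : (n:ℝ) * θ = m * θ + θ := by rw [hm]; ring
  have hsin_add : Real.sin ((n:ℝ) * θ) =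
      Real.sin (m * θ) * Real.cos θ + Real.cos (m * θ) * Real.sin θ := by
    rw [hexp, Real.sin_add]
  rw [hcast, hsin_add]
  have hcos1 : Real.cos θ ≤ 1 := Real.cos_le_one θ
  have hn1 : (n:ℝ) = m + 1 := by rw [hm]; ring
  nlinarith [key, hsinm, hm1,
    mul_le_mul_of_nonneg_left hcos1 (by positivity : (0:ℝ) ≤ m * Real.sin (m*θ))]
end

section
/- Let n ≥ 2 and 0 < θ < π/n. The roots of P_θ(ζ) = ζ^n − (sin nθ / sin θ) ζ + sin((n−1)θ)/sin θ are distinct (P_θ is separable). -/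
open Polynomial

/-- For `0 < s < t < π`, `s * sin t < t * sin s` (strict concavity of `sin`). -/
lemma sin_ratio_aux (s t : ℝ) (hs : 0 < s) (hst : s < t) (ht : t < Real.pi) :
    s * Real.sin t < t * Real.sin s := by
  have ht0 : 0 < t := hs.trans hst
  have h := strictConcaveOn_sin_Icc.2
    (show (0:ℝ) ∈ Set.Icc 0 Real.pi from ⟨le_refl 0, Real.pi_pos.le⟩)
    (show t ∈ Set.Icc 0 Real.pi from ⟨ht0.le, ht.le⟩) (by positivity)
    (show (0:ℝ) < 1 - s / t by
      have : s / t < 1 := (div_lt_one ht0).mpr hst; linarith)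
    (show (0:ℝ) < s / t by positivity) (by ring)
  simp only [smul_eq_mul, mul_zero, Real.sin_zero, zero_add] at h
  rw [div_mul_cancel₀ _ ht0.ne'] at h
  calc s * Real.sin t = t * (s / t * Real.sin t) := by field_simp
    _ < t * Real.sin s := by
        apply mul_lt_mul_of_pos_left _ ht0
        linarith

theorem stmt_13 (n : ℕ) (hn : 2 ≤ n) (θ : ℝ) (hθ0 : 0 < θ) (hθ1 : θ < Real.pi / n) :
    (X ^ n - C ((Real.sin (n * θ) / Real.sin θ : ℝ) : ℂ) * X
      + C ((Real.sin ((n - 1 : ℕ) * θ) / Real.sin θ : ℝ) : ℂ)).Separable := by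
  set m : ℕ := n - 1 with hm
  have hnm : n = m + 1 := by omega
  have hm1 : 1 ≤ m := by omega
  have hn2 : (2:ℝ) ≤ n := by exact_mod_cast hn
  have hn0 : (0:ℝ) < n := by positivity
  set S : ℝ := Real.sin θ with hS
  set A : ℝ := Real.sin (n * θ) with hA
  set B : ℝ := Real.sin ((m : ℕ) * θ) with hB
  -- basic positivity
  have hnθπ : (n : ℝ) * θ < Real.pi := by
    rw [lt_div_iff₀ hn0] at hθ1; linarith [hθ1]
  have hθπ : θ < Real.pi := by nlinarith
  have hSpos : 0 < S := Real.sin_pos_of_pos_of_lt_pi hθ0 hθπ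
  have hApos : 0 < A := Real.sin_pos_of_pos_of_lt_pi (by positivity) hnθπ
  have hmpos : (0:ℝ) < m := by exact_mod_cast Nat.pos_of_ne_zero (by omega)
  have hmθpos : 0 < (m : ℝ) * θ := by positivity
  have hmθlt : (m : ℝ) * θ < (n : ℝ) * θ := by
    have : (m : ℝ) < n := by exact_mod_cast (by omega : m < n)
    nlinarith
  have hBpos : 0 < B := Real.sin_pos_of_pos_of_lt_pi hmθpos (hmθlt.trans hnθπ)
  -- strict inequalities from concavity
  have h1 : A < (n : ℝ) * S := by
    have := sin_ratio_aux θ ((n:ℝ) * θ) hθ0 (by nlinarith) hnθπ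
    nlinarith
  have h2 : (m : ℝ) * A < (n : ℝ) * B := by
    have := sin_ratio_aux ((m:ℝ) * θ) ((n:ℝ) * θ) hmθpos hmθlt hnθπ
    nlinarith
  -- the key strict inequality
  have hineq : (m : ℝ) ^ m * A ^ n < (n : ℝ) ^ n * B ^ m * S := by
    have e1 : (m : ℝ) ^ m * A ^ n = ((m:ℝ) * A) ^ m * A := by
      rw [hnm, pow_succ, mul_pow]; ring
    have e2 : (n : ℝ) ^ n * B ^ m * S = ((n:ℝ) * B) ^ m * ((n:ℝ) * S) := by
      rw [hnm, pow_succ, mul_pow]; ring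
    rw [e1, e2]
    exact mul_lt_mul'' (pow_lt_pow_left₀ h2 (by positivity) (by omega)) h1
      (by positivity) hApos.le
  -- now the separability
  rw [Polynomial.separable_def, Polynomial.isCoprime_iff_aeval_ne_zero_of_isAlgClosed (k := ℂ) ℂ]
  intro z
  by_contra hcon
  push_neg at hcon
  obtain ⟨h1', h2'⟩ := hcon
  simp only [derivative_add, derivative_sub, derivative_mul, derivative_C, derivative_X,
    derivative_X_pow, map_add, map_sub, map_mul, map_pow, aeval_X, aeval_C, map_natCast,
    zero_mul, mul_one, add_zero, zero_add, Algebra.algebraMap_self_apply] at h1' h2'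
  have hSne : ((S : ℂ)) ≠ 0 := by exact_mod_cast hSpos.ne'
  push_cast at h1' h2'
  rw [← hm] at h2'
  field_simp at h1' h2'
  rw [hnm] at h1' h2'
  push_cast at h1' h2'
  have hnc : ((n:ℕ):ℂ) = (m:ℂ) + 1 := by rw [hnm]; push_cast; ring
  have eA : (A:ℂ) = (n:ℂ) * z ^ m * S := by rw [hnc]; linear_combination -h2'
  have eB : (B:ℂ) = (m:ℂ) * z ^ n * S := by
    rw [show z ^ n = z ^ (m+1) from by rw [hnm]]; linear_combination h1' - z * h2'
  have keyC : ((m:ℂ)) ^ m * (A:ℂ) ^ n = ((n:ℂ)) ^ n * (B:ℂ) ^ m * (S:ℂ) := by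
    rw [eA, eB, mul_pow, mul_pow, mul_pow, mul_pow, ← pow_mul z, ← pow_mul z,
      Nat.mul_comm m n, show ((S:ℂ)) ^ n = (S:ℂ) ^ m * S from by rw [hnm, pow_succ]]
    ring
  have keyR : (m:ℝ) ^ m * A ^ n = (n:ℝ) ^ n * B ^ m * S := by exact_mod_cast keyC
  linarith
end

section
/- Let n ≥ 3 and 0 ≤ θ < π/n. Every root ζ of P_θ(ζ) = ζ^n − (sin nθ / sin θ) ζ + sin((n−1)θ)/sin θ other than e^{iθ} and e^{−iθ} satisfies |ζ| > 1 (with the convention sin nθ/sin θ = n and sin(n−1)θ/sin θ = n−1 when θ = 0). -/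
open Complex

open Finset in
noncomputable def PTsv (c : ℝ) : ℕ → ℝ
  | 0 => 0
  | 1 => 1
  | (k+2) => 2*c*PTsv c (k+1) - PTsv c k

lemma PTsv_rec (c : ℝ) (k : ℕ) : PTsv c (k+2) = 2*c*PTsv c (k+1) - PTsv c k := rfl

lemma PTsv_sq (c : ℝ) (k : ℕ) :
    PTsv c (k+1) * PTsv c (k+1) - PTsv c (k+2) * PTsv c k = 1 := by
  induction k with
  | zero => simp [PTsv]
  | succ p ih =>
      rw [PTsv_rec c (p+1)]
      linear_combination ih + PTsv c (p+2) * PTsv_rec c p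

noncomputable def PTQ (c : ℝ) (m : ℕ) (z : ℂ) : ℂ :=
  ∑ j ∈ Finset.range m, (PTsv c (j+1) : ℂ) * z^(m - 1 - j)

noncomputable def PTR (c : ℝ) (m : ℕ) (z : ℂ) : ℂ :=
  ∑ j ∈ Finset.range m, (PTsv c (j+1) : ℂ) * z^j

lemma PTQ_one (c : ℝ) (z : ℂ) : PTQ c 1 z = 1 := by simp [PTQ, PTsv]
lemma PTR_one (c : ℝ) (z : ℂ) : PTR c 1 z = 1 := by simp [PTR, PTsv]

lemma PTQ_succ (c : ℝ) (m : ℕ) (z : ℂ) :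
    PTQ c (m+1) z = z * PTQ c m z + (PTsv c (m+1) : ℂ) := by
  unfold PTQ
  rw [Finset.sum_range_succ, Finset.mul_sum]
  congr 1
  · apply Finset.sum_congr rfl
    intro j hj
    have hj' : j < m := Finset.mem_range.mp hj
    rw [show m + 1 - 1 - j = (m - 1 - j) + 1 by omega, pow_succ]
    ring
  · simp

lemma PTR_succ (c : ℝ) (m : ℕ) (z : ℂ) :
    PTR c (m+1) z = PTR c m z + (PTsv c (m+1) : ℂ) * z^m :=
  Finset.sum_range_succ _ _

/-- Szegő-type recurrences. -/
lemma PTrel (c : ℝ) : ∀ m, 1 ≤ m → (∀ k, 1 ≤ k → k < m → PTsv c k ≠ 0) → ∀ z : ℂ,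
    (PTsv c m : ℂ) * PTQ c (m+1) z
      = (PTsv c (m+1) : ℂ) * PTQ c m z + z * PTR c m z ∧
    (PTsv c m : ℂ) * PTR c (m+1) z
      = PTQ c m z + (PTsv c (m+1) : ℂ) * z * PTR c m z := by
  intro m
  induction m with
  | zero => omega
  | succ p ih =>
      intro _ hs z
      rcases Nat.eq_zero_or_pos p with hp0 | hp1
      · subst hp0
        constructor
        · simp [PTQ, PTR, PTsv, Finset.sum_range_succ]
          ring
        · simp [PTQ, PTR, PTsv, Finset.sum_range_succ]
      · obtain ⟨ih1, ih2⟩ := ih hp1 (fun k h1 h2 => hs k h1 (by omega)) z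
        have ha : (PTsv c p : ℂ) ≠ 0 := by
          exact_mod_cast hs p hp1 (by omega)
        have sqc : (PTsv c (p+1) : ℂ) * (PTsv c (p+1) : ℂ)
            - (PTsv c (p+2) : ℂ) * (PTsv c p : ℂ) = 1 := by
          exact_mod_cast PTsv_sq c p
        rw [PTQ_succ c p] at ih1
        rw [PTR_succ c p] at ih2
        constructor
        · refine mul_left_cancel₀ ha ?_
          rw [PTQ_succ c (p+1), PTQ_succ c p, PTR_succ c p]
          linear_combination (z * (PTsv c (p+1) : ℂ)) * ih1 - z * ih2
            + (z * PTQ c p z) * sqc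
        · refine mul_left_cancel₀ ha ?_
          rw [PTR_succ c (p+1), PTR_succ c p, PTQ_succ c p, pow_succ]
          linear_combination ((PTsv c (p+1) : ℂ)) * ih2 - ih1
            + (z * PTR c p z) * sqc

lemma PTkey (c : ℝ) (N : ℕ) (hpos : ∀ k, 1 ≤ k → k ≤ N → 0 < PTsv c k) :
    ∀ m, m + 2 ≤ N → ∀ z : ℂ, ‖z‖ ≤ 1 →
      PTQ c (m+1) z ≠ 0 ∧ ‖PTR c (m+1) z‖ ≤ ‖PTQ c (m+1) z‖ := by
  intro m
  induction m with
  | zero =>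
      intro _ z _
      rw [PTQ_one, PTR_one]
      exact ⟨one_ne_zero, le_refl _⟩
  | succ p ih =>
      intro hN z hz
      obtain ⟨hQ, hR⟩ := ih (by omega) z hz
      have ha : 0 < PTsv c (p+1) := hpos (p+1) (by omega) (by omega)
      have hb : 0 < PTsv c (p+2) := hpos (p+2) (by omega) (by omega)
      have hd : 0 < PTsv c (p+3) := hpos (p+3) (by omega) (by omega)
      have hb1 : 1 < PTsv c (p+2) := by
        nlinarith [PTsv_sq c (p+1)]
      obtain ⟨ih1, ih2⟩ := PTrel c (p+1) (by omega)
        (fun k h1 h2 => (hpos k h1 (by omega)).ne') z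
      set X := PTQ c (p+1) z with hXdef
      set Y := z * PTR c (p+1) z with hYdef
      have hYX : ‖Y‖ ≤ ‖X‖ := by
        rw [hYdef, norm_mul]
        calc ‖z‖ * ‖PTR c (p+1) z‖
            ≤ 1 * ‖PTR c (p+1) z‖ := by
              apply mul_le_mul_of_nonneg_right hz (norm_nonneg _)
          _ = ‖PTR c (p+1) z‖ := one_mul _
          _ ≤ ‖X‖ := hR
      have hQpos : 0 < ‖X‖ := norm_pos_iff.mpr hQ
      have hQ2 : (PTsv c (p+1) : ℂ) * PTQ c (p+2) z = (PTsv c (p+2) : ℂ) * X + Y := ih1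
      have hR2 : (PTsv c (p+1) : ℂ) * PTR c (p+2) z = X + (PTsv c (p+2) : ℂ) * Y := by
        rw [ih2, hYdef]
        ring
      constructor
      · intro h0
        rw [h0, mul_zero] at hQ2
        have hneg : (PTsv c (p+2) : ℂ) * X = -Y := by linear_combination -hQ2
        have habs : ‖(PTsv c (p+2) : ℂ) * X‖ = ‖Y‖ := by
          rw [hneg]
          exact norm_neg Y
        rw [norm_mul, Complex.norm_real, Real.norm_eq_abs, abs_of_pos hb] at habs
        nlinarith [hYX]
      · have hns : Complex.normSq Y ≤ Complex.normSq X := by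
          rw [← Complex.sq_norm, ← Complex.sq_norm]
          exact pow_le_pow_left₀ (norm_nonneg _) hYX 2
        have hexpand : Complex.normSq ((PTsv c (p+2) : ℂ)*X + Y)
            - Complex.normSq (X + (PTsv c (p+2) : ℂ)*Y)
            = ((PTsv c (p+2))^2 - 1) * (Complex.normSq X - Complex.normSq Y) := by
          simp only [Complex.normSq_apply, Complex.add_re, Complex.add_im,
            Complex.mul_re, Complex.mul_im, Complex.ofReal_re, Complex.ofReal_im]
          ring
        have hnsq : Complex.normSq (X + (PTsv c (p+2) : ℂ)*Y)
            ≤ Complex.normSq ((PTsv c (p+2) : ℂ)*X + Y) := by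
          have hfac : 0 ≤ ((PTsv c (p+2))^2 - 1) * (Complex.normSq X - Complex.normSq Y) :=
            mul_nonneg (by nlinarith) (by linarith)
          linarith
        have habs2 : ‖X + (PTsv c (p+2) : ℂ)*Y‖
            ≤ ‖(PTsv c (p+2) : ℂ)*X + Y‖ := by
          rw [Complex.norm_def, Complex.norm_def]
          exact Real.sqrt_le_sqrt hnsq
        have l1 : ‖(PTsv c (p+1) : ℂ) * PTR c (p+2) z‖
            = PTsv c (p+1) * ‖PTR c (p+2) z‖ := by
          rw [norm_mul, Complex.norm_real, Real.norm_eq_abs, abs_of_pos ha]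
        have l2 : ‖(PTsv c (p+1) : ℂ) * PTQ c (p+2) z‖
            = PTsv c (p+1) * ‖PTQ c (p+2) z‖ := by
          rw [norm_mul, Complex.norm_real, Real.norm_eq_abs, abs_of_pos ha]
        have : PTsv c (p+1) * ‖PTR c (p+2) z‖
            ≤ PTsv c (p+1) * ‖PTQ c (p+2) z‖ := by
          rw [← l1, ← l2, hQ2, hR2]
          exact habs2
        exact le_of_mul_le_mul_left this ha

lemma PTsv_two (c : ℝ) : PTsv c 2 = 2*c := by
  rw [PTsv_rec c 0]
  simp [PTsv]

lemma PTfact (c : ℝ) : ∀ (m : ℕ) (z : ℂ),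
    z^(m+2) - (PTsv c (m+2) : ℂ) * z + (PTsv c (m+1) : ℂ)
      = (z^2 - 2*(c:ℂ)*z + 1) * PTQ c (m+1) z := by
  intro m
  induction m with
  | zero =>
      intro z
      rw [PTQ_one, PTsv_two]
      push_cast
      simp [PTsv]
  | succ p ih =>
      intro z
      rw [PTQ_succ c (p+1)]
      have hrec : ((PTsv c (p+3) : ℝ) : ℂ)
          = 2*(c:ℂ)*(PTsv c (p+2) : ℂ) - (PTsv c (p+1) : ℂ) := by
        exact_mod_cast congrArg (Complex.ofReal) (PTsv_rec c (p+1))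
      rw [show p+1+2 = p+3 from rfl, hrec]
      linear_combination z * ih z

lemma PTsv_nat (k : ℕ) : PTsv 1 k = (k : ℝ) := by
  induction k using Nat.twoStepInduction with
  | zero => simp [PTsv]
  | one => simp [PTsv]
  | more p ih1 ih2 =>
      rw [PTsv_rec, ih1, ih2]
      push_cast
      ring

lemma PTsv_sin (θ : ℝ) (hs : Real.sin θ ≠ 0) (k : ℕ) :
    PTsv (Real.cos θ) k = Real.sin (k*θ) / Real.sin θ := by
  induction k using Nat.twoStepInduction with
  | zero => simp [PTsv]
  | one => simp [PTsv, div_self hs]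
  | more p ih1 ih2 =>
      rw [PTsv_rec, ih1, ih2]
      have trig : Real.sin (((p:ℝ)+2)*θ)
          = 2*Real.cos θ*Real.sin (((p:ℝ)+1)*θ) - Real.sin ((p:ℝ)*θ) := by
        rw [show ((p:ℝ)+2)*θ = ((p:ℝ)+1)*θ + θ by ring,
            show (p:ℝ)*θ = ((p:ℝ)+1)*θ - θ by ring, Real.sin_add, Real.sin_sub]
        ring
      push_cast
      rw [trig]
      ring

theorem stmt_15 (n : ℕ) (hn : 3 ≤ n) (θ : ℝ) (hθ0 : 0 ≤ θ) (hθ1 : θ < Real.pi / n)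
    (c1 c2 : ℝ)
    (hc1 : c1 = if θ = 0 then (n : ℝ) else Real.sin (n * θ) / Real.sin θ)
    (hc2 : c2 = if θ = 0 then ((n : ℝ) - 1) else Real.sin ((n - 1 : ℕ) * θ) / Real.sin θ) :
    ∀ ζ : ℂ, ζ ^ n - (c1 : ℂ) * ζ + (c2 : ℂ) = 0 →
      ζ ≠ Complex.exp ((θ : ℂ) * I) → ζ ≠ Complex.exp (-(θ : ℂ) * I) →
      1 < ‖ζ‖ := by
  intro ζ hP hne1 hne2
  by_contra hgt
  push_neg at hgt
  set c := Real.cos θ with hc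
  have hn0 : 0 < n := by omega
  have hkey : (∀ k, 1 ≤ k → k ≤ n → 0 < PTsv c k)
      ∧ c1 = PTsv c n ∧ c2 = PTsv c (n-1) := by
    rcases eq_or_lt_of_le hθ0 with h0 | hθpos
    · have hθz : θ = 0 := h0.symm
      subst hθz
      have hcc : c = 1 := by rw [hc, Real.cos_zero]
      rw [hcc]
      simp only [if_pos rfl, if_true] at hc1 hc2
      refine ⟨?_, ?_, ?_⟩
      · intro k hk _
        rw [PTsv_nat]
        exact_mod_cast hk
      · rw [hc1, PTsv_nat]
      · rw [hc2, PTsv_nat, Nat.cast_sub (by omega)]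
        norm_num
    · have hθne : θ ≠ 0 := ne_of_gt hθpos
      have hπ := Real.pi_pos
      have hnR : (0:ℝ) < n := by exact_mod_cast hn0
      have hθπ : θ < Real.pi :=
        lt_of_lt_of_le hθ1 (div_le_self hπ.le (by exact_mod_cast hn0))
      have hsθ : 0 < Real.sin θ := Real.sin_pos_of_pos_of_lt_pi hθpos hθπ
      have hnθ : (n:ℝ)*θ < Real.pi := by
        rw [lt_div_iff₀ hnR] at hθ1
        linarith
      refine ⟨?_, ?_, ?_⟩
      · intro k hk1 hkn
        rw [hc, PTsv_sin θ hsθ.ne' k]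
        apply div_pos _ hsθ
        apply Real.sin_pos_of_pos_of_lt_pi
        · exact mul_pos (by exact_mod_cast hk1) hθpos
        · calc (k:ℝ)*θ ≤ (n:ℝ)*θ := by
                apply mul_le_mul_of_nonneg_right _ hθ0
                exact_mod_cast hkn
            _ < Real.pi := hnθ
      · rw [hc1, if_neg hθne, hc, PTsv_sin θ hsθ.ne' n]
      · rw [hc2, if_neg hθne, hc, PTsv_sin θ hsθ.ne' (n-1)]
  obtain ⟨hpos, hc1s, hc2s⟩ := hkey
  rw [hc1s, hc2s] at hP
  have hfac := PTfact c (n-2) ζ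
  have e2 : n - 2 + 2 = n := by omega
  have e1 : n - 2 + 1 = n - 1 := by omega
  rw [e2, e1] at hfac
  have hQR := PTkey c n hpos (n-2) (by omega) ζ hgt
  rw [e1] at hQR
  have hDQ : (ζ^2 - 2*(c:ℂ)*ζ + 1) * PTQ c (n-1) ζ = 0 := by
    rw [← hfac]
    exact hP
  rcases mul_eq_zero.mp hDQ with hquad | hqz
  · have hE1 : Complex.exp ((θ:ℂ)*I) = Complex.cos θ + Complex.sin θ * I :=
      Complex.exp_mul_I (θ:ℂ)
    have hE2 : Complex.exp (-(θ:ℂ)*I) = Complex.cos θ - Complex.sin θ * I := by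
      rw [show -(θ:ℂ)*I = (-(θ:ℂ))*I by ring, Complex.exp_mul_I,
        Complex.cos_neg, Complex.sin_neg]
      ring
    have hsum : Complex.exp ((θ:ℂ)*I) + Complex.exp (-(θ:ℂ)*I) = 2*(c:ℂ) := by
      rw [hE1, hE2, hc, Complex.ofReal_cos]
      ring
    have hprod : Complex.exp ((θ:ℂ)*I) * Complex.exp (-(θ:ℂ)*I) = 1 := by
      rw [← Complex.exp_add, show (θ:ℂ)*I + -(θ:ℂ)*I = 0 by ring, Complex.exp_zero]
    have hff : (ζ - Complex.exp ((θ:ℂ)*I)) * (ζ - Complex.exp (-(θ:ℂ)*I)) = 0 := by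
      linear_combination hquad - ζ*hsum + hprod
    rcases mul_eq_zero.mp hff with h | h
    · exact hne1 (sub_eq_zero.mp h)
    · exact hne2 (sub_eq_zero.mp h)
  · exact hQR.1 hqz
end

section
/- Let n ≥ 2 and let q = e^{2iθ} with θ ∈ ℝ, sin θ ≠ 0, and suppose q_1 = q, q_2, ..., q_{n−1} are complex numbers such that, setting q_0 = 1, the k-th elementary symmetric polynomial of (q_0, ..., q_{n−1}) vanishes for 1 ≤ k ≤ n−2. Then for each 2 ≤ k ≤ n−1, the number ζ_k = e^{−iθ} q_k is a root of P_θ(ζ) = ζ^n − (sin nθ / sin θ) ζ + sin((n−1)θ)/sin θ. -/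
open Complex Polynomial

theorem stmt_19 (n : ℕ) (hn : 2 ≤ n) (θ : ℝ) (hθ : Real.sin θ ≠ 0) (q : ℕ → ℂ)
    (hq0 : q 0 = 1) (hq1 : q 1 = Complex.exp (2 * (θ : ℂ) * I))
    (hesymm : ∀ k, 1 ≤ k → k ≤ n - 2 →
      ∑ s ∈ Finset.powersetCard k (Finset.range n), ∏ i ∈ s, q i = 0) :
    ∀ k, 2 ≤ k → k ≤ n - 1 →
      (Complex.exp (-(θ : ℂ) * I) * q k) ^ n
        - ((Real.sin (n * θ) / Real.sin θ : ℝ) : ℂ) * (Complex.exp (-(θ : ℂ) * I) * q k)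
        + ((Real.sin ((n - 1 : ℕ) * θ) / Real.sin θ : ℝ) : ℂ) = 0 := by
  have hn1 : 1 ≤ n := by omega
  set P : Polynomial ℂ := ∏ i ∈ Finset.range n, (X - C (q i)) with hP
  have hmonic : P.Monic := monic_prod_of_monic _ _ fun i _ => monic_X_sub_C (q i)
  have hdeg : P.natDegree = n := by
    rw [hP, natDegree_prod_of_monic _ _ fun i _ => monic_X_sub_C (q i)]
    simp
  have hcoeff : ∀ m, 2 ≤ m → m ≤ n - 1 → P.coeff m = 0 := by
    intro m h2 h1
    have hmn : m ≤ n := by omega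
    have hrw : P = ∏ i ∈ Finset.range n, (X + C (-(q i))) := by
      simp [hP, sub_eq_add_neg]
    have hv := Finset.prod_X_add_C_coeff (Finset.range n) (fun i => -(q i))
      (k := m) (by simpa using hmn)
    rw [← hrw] at hv
    simp only [Finset.card_range] at hv
    rw [hv]
    have : ∀ t ∈ (Finset.range n).powersetCard (n - m),
        ∏ i ∈ t, (-(q i)) = (-1 : ℂ) ^ (n - m) * ∏ i ∈ t, q i := by
      intro t ht
      calc ∏ i ∈ t, -q i = ∏ i ∈ t, (-1) * q i := by simp only [neg_mul, one_mul]
        _ = (-1 : ℂ) ^ t.card * ∏ i ∈ t, q i := by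
              rw [Finset.prod_mul_distrib, Finset.prod_const]
        _ = (-1 : ℂ) ^ (n - m) * ∏ i ∈ t, q i := by
              rw [(Finset.mem_powersetCard.mp ht).2]
    rw [Finset.sum_congr rfl this, ← Finset.mul_sum,
      hesymm (n - m) (by omega) (by omega), mul_zero]
  have key : ∀ j, j < n → q j ^ n + P.coeff 1 * q j + P.coeff 0 = 0 := by
    intro j hj
    have h0 : P.eval (q j) = 0 := by
      rw [hP, eval_prod]
      exact Finset.prod_eq_zero (Finset.mem_range.mpr hj) (by simp)
    rw [Polynomial.eval_eq_sum_range' (n := n + 1) (by omega) (q j),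
      Finset.sum_range_succ] at h0
    have hsub : ({0, 1} : Finset ℕ) ⊆ Finset.range n := by
      intro x hx
      simp only [Finset.mem_insert, Finset.mem_singleton] at hx
      rcases hx with rfl | rfl <;> simp <;> omega
    have hsum : ∑ i ∈ Finset.range n, P.coeff i * (q j) ^ i
        = P.coeff 0 + P.coeff 1 * q j := by
      rw [← Finset.sum_subset hsub (fun x hx hx' => by
        have : 2 ≤ x ∧ x ≤ n - 1 := by
          simp only [Finset.mem_insert, Finset.mem_singleton] at hx'
          simp only [Finset.mem_range] at hx
          omega
        rw [hcoeff x this.1 this.2, zero_mul])]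
      rw [Finset.sum_pair (by norm_num)]
      ring
    rw [hsum] at h0
    have hn' : P.coeff n = 1 := by
      have := hmonic.coeff_natDegree
      rwa [hdeg] at this
    rw [hn'] at h0
    linear_combination h0
  -- exponential setup
  obtain ⟨m, rfl⟩ : ∃ m, n = m + 2 := ⟨n - 2, by omega⟩
  set E : ℂ := Complex.exp ((θ : ℂ) * I) with hE
  have hEne : E ≠ 0 := Complex.exp_ne_zero _
  have Pm : ∀ j : ℕ, 2 * I * E ^ j * Complex.sin ((j : ℂ) * θ) = (E ^ 2) ^ j - 1 := by
    intro j
    have h1 : Complex.exp ((j : ℂ) * θ * I) = E ^ j := by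
      rw [show (j : ℂ) * θ * I = (j : ℂ) * (θ * I) by ring, Complex.exp_nat_mul]
    rw [Complex.sin, show -((j : ℂ) * θ) * I = -((j : ℂ) * θ * I) by ring,
      Complex.exp_neg, h1]
    have hinv : E ^ j * (E ^ j)⁻¹ = 1 := mul_inv_cancel₀ (pow_ne_zero _ hEne)
    have hI : I ^ 2 = -1 := Complex.I_sq
    linear_combination I ^ 2 * hinv + (1 - (E ^ 2) ^ j) * hI
  have hs1 : Complex.sin ((θ : ℝ) : ℂ) ≠ 0 := by
    rw [← Complex.ofReal_sin]
    exact_mod_cast hθ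
  have hP1 : 2 * I * E * Complex.sin ((θ : ℝ) : ℂ) = E ^ 2 - 1 := by
    simpa using Pm 1
  have hS1 : Complex.sin ((θ : ℝ) : ℂ) = (E ^ 2 - 1) / (2 * I * E) := by
    rw [eq_div_iff (by simp [hEne, Complex.I_ne_zero] : (2 : ℂ) * I * E ≠ 0)]
    linear_combination hP1
  have hE2 : E ^ 2 - 1 ≠ 0 := by
    intro h
    apply hs1
    rw [hS1, h, zero_div]
  -- the key relations
  have hq1' : q 1 = E ^ 2 := by
    rw [hq1, show (2 : ℂ) * θ * I = θ * I + θ * I by ring, Complex.exp_add, sq]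
  intro k hk2 hkn
  have hkey := key k (by omega)
  have h0' := key 0 (by omega)
  rw [hq0] at h0'
  have h1' := key 1 (by omega)
  rw [hq1'] at h1'
  have main : (E ^ 2 - 1) * q k ^ (m + 2) - ((E ^ 2) ^ (m + 2) - 1) * q k
      + ((E ^ 2) ^ (m + 2) - E ^ 2) = 0 := by
    linear_combination (E ^ 2 - 1) * hkey + (q k - E ^ 2) * h0' + (1 - q k) * h1'
  -- rewrite the goal
  have hA : Complex.sin (((m + 2 : ℕ) : ℂ) * θ) / Complex.sin ((θ : ℝ) : ℂ)
      = ((E ^ 2) ^ (m + 2) - 1) / (E ^ (m + 1) * (E ^ 2 - 1)) := by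
    rw [div_eq_div_iff hs1 (mul_ne_zero (pow_ne_zero _ hEne) hE2)]
    linear_combination Complex.sin ((θ : ℝ) : ℂ) * Pm (m + 2)
      - (E ^ (m + 1) * Complex.sin (((m + 2 : ℕ) : ℂ) * θ)) * hP1
  have hB : Complex.sin (((m + 1 : ℕ) : ℂ) * θ) / Complex.sin ((θ : ℝ) : ℂ)
      = ((E ^ 2) ^ (m + 1) - 1) / (E ^ m * (E ^ 2 - 1)) := by
    rw [div_eq_div_iff hs1 (mul_ne_zero (pow_ne_zero _ hEne) hE2)]
    linear_combination Complex.sin ((θ : ℝ) : ℂ) * Pm (m + 1)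
      - (E ^ m * Complex.sin (((m + 1 : ℕ) : ℂ) * θ)) * hP1
  have hexpneg : Complex.exp (-(θ : ℂ) * I) = E⁻¹ := by
    rw [show -(θ : ℂ) * I = -((θ : ℂ) * I) by ring, Complex.exp_neg]
  rw [hexpneg]
  have hcast1 : ((Real.sin ((m + 2 : ℕ) * θ) / Real.sin θ : ℝ) : ℂ)
      = Complex.sin (((m + 2 : ℕ) : ℂ) * θ) / Complex.sin ((θ : ℝ) : ℂ) := by
    push_cast
    norm_num
  have hcast2 : ((Real.sin ((m + 2 - 1 : ℕ) * θ) / Real.sin θ : ℝ) : ℂ)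
      = Complex.sin (((m + 1 : ℕ) : ℂ) * θ) / Complex.sin ((θ : ℝ) : ℂ) := by
    have : (m + 2 - 1 : ℕ) = m + 1 := rfl
    rw [this]
    push_cast
    norm_num
  rw [hcast1, hcast2, hA, hB]
  field_simp [hEne, hE2]
  have hd : (q k / E) ^ (m + 2) * E ^ (m + 2) = q k ^ (m + 2) := by
    rw [div_pow, div_mul_cancel₀ _ (pow_ne_zero _ hEne)]
  ring_nf
  ring_nf at main
  linear_combination E ^ m * main + E ^ m * (E ^ 2 - 1) * hd
end
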